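/- arXiv:1905.05052 — 2 statements merged into one kernel-verified Lean document; each statement's English description precedes it below -/
import Mathlib

section
/- Let x₁, x₂, x₃ ∈ ℝ² be the vertices of a triangle with 2A := det(x₂−x₁, x₃−x₁) ≠ 0, and let J : ℝ² → ℝ² be the rotation J(v₁,v₂) = (v₂,−v₁). Set ν₂ := J(x₁−x₃) and ν₃ := J(x₂−x₁) (for a counterclockwise-oriented triangle these are the outward normals to the edges opposite x₂ and x₃, scaled by the corresponding edge lengths). Then for every affine function f : ℝ² → ℝ, f(p) = ⟨g, p⟩ + c with g ∈ ℝ² and c ∈ ℝ, one has g = −(1/(2A))·[(f(x₂)−f(x₁))·ν₂ + (f(x₃)−f(x₁))·ν₃]. -/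
/-- The 2×2 determinant of the matrix with columns `u`, `v`. -/
def det2 (u v : ℝ × ℝ) : ℝ := u.1 * v.2 - u.2 * v.1

/-- The rotation `J(v₁,v₂) = (v₂,−v₁)`. -/
def rotJ (v : ℝ × ℝ) : ℝ × ℝ := (v.2, -v.1)

/-- MPFA gradient reconstruction formula: for a triangle `x₁x₂x₃` with
`2A = det(x₂−x₁, x₃−x₁) ≠ 0`, normals `ν₂ = J(x₁−x₃)`, `ν₃ = J(x₂−x₁)`, and an
affine function `f(p) = ⟨g,p⟩ + c`, one has
`g = −(1/(2A))·[(f(x₂)−f(x₁))·ν₂ + (f(x₃)−f(x₁))·ν₃]`. -/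
theorem stmt5 (x₁ x₂ x₃ : ℝ × ℝ) (A : ℝ)
    (hA : 2 * A = det2 (x₂ - x₁) (x₃ - x₁)) (hA0 : 2 * A ≠ 0)
    (f : ℝ × ℝ → ℝ) (g : ℝ × ℝ) (c : ℝ)
    (hf : ∀ p : ℝ × ℝ, f p = g.1 * p.1 + g.2 * p.2 + c) :
    g = (-(1 / (2 * A))) •
        ((f x₂ - f x₁) • rotJ (x₁ - x₃) + (f x₃ - f x₁) • rotJ (x₂ - x₁)) := by
  rw [det2] at hA
  simp only [hf, rotJ, Prod.ext_iff, Prod.smul_fst, Prod.smul_snd, Prod.fst_add, Prod.snd_add,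
    Prod.fst_sub, Prod.snd_sub, smul_eq_mul]
  simp only [Prod.fst_sub, Prod.snd_sub] at hA
  have hA' : A ≠ 0 := fun h => hA0 (by rw [h]; ring)
  constructor
  · field_simp
    linear_combination g.1 * hA
  · field_simp
    linear_combination g.2 * hA
end

section
/- Let h₁, h₂ > 0, set a = −h₁/(h₂(h₁+h₂)), b = (h₁+h₂)/(h₁h₂), c = (h₁² − (h₁+h₂)²)/(h₁h₂(h₁+h₂)), and let f : ℝ → ℝ be three times differentiable on [x, x+h₁+h₂] with |f'''(t)| ≤ M₃ for all t in that interval. Then |a·f(x+h₁+h₂) + b·f(x+h₁) + c·f(x) − f'(x)| ≤ (M₃/6)·h₁(h₁+h₂)(2h₁+h₂)/h₂. In particular, if h₁, h₂ ≤ h and h₂ ≥ κh for a fixed κ > 0, the approximation error is O(h²). -/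
open Set

lemma taylor3_bound (x s M : ℝ) (hs : 0 < s) (f f' f'' f''' : ℝ → ℝ)
    (hf : ∀ t ∈ Icc x (x + s), HasDerivWithinAt f (f' t) (Icc x (x + s)) t)
    (hf' : ∀ t ∈ Icc x (x + s), HasDerivWithinAt f' (f'' t) (Icc x (x + s)) t)
    (hf'' : ∀ t ∈ Icc x (x + s), HasDerivWithinAt f'' (f''' t) (Icc x (x + s)) t)
    (hM : ∀ t ∈ Icc x (x + s), |f''' t| ≤ M) :
    |f (x + s) - (f x + f' x * s + f'' x * s ^ 2 / 2)| ≤ M * s ^ 3 / 6 := by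
  set S : Set ℝ := Icc x (x + s) with hS
  have hud : UniqueDiffOn ℝ S := uniqueDiffOn_Icc (by linarith)
  have E1 : EqOn (iteratedDerivWithin 1 f S) f' S := by
    intro t ht
    rw [iteratedDerivWithin_one]
    exact (hf t ht).derivWithin (hud t ht)
  have E2 : EqOn (iteratedDerivWithin 2 f S) f'' S := by
    intro t ht
    rw [iteratedDerivWithin_succ, derivWithin_congr E1 (E1 ht)]
    exact (hf' t ht).derivWithin (hud t ht)
  have E3 : EqOn (iteratedDerivWithin 3 f S) f''' S := by
    intro t ht
    rw [iteratedDerivWithin_succ, derivWithin_congr E2 (E2 ht)]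
    exact (hf'' t ht).derivWithin (hud t ht)
  have hcd : ContDiffOn ℝ 2 f S := by
    apply contDiffOn_of_differentiableOn_deriv
    intro m hm
    have hm' : m ≤ 2 := by exact_mod_cast hm
    interval_cases m
    · rw [iteratedDerivWithin_zero]; exact fun t ht => (hf t ht).differentiableWithinAt
    · exact (fun t ht => ((hf' t ht).differentiableWithinAt).congr E1 (E1 ht))
    · exact (fun t ht => ((hf'' t ht).differentiableWithinAt).congr E2 (E2 ht))
  have hdiff : DifferentiableOn ℝ (iteratedDerivWithin 2 f S) (Ioo x (x + s)) := by
    intro t ht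
    have htS : t ∈ S := Ioo_subset_Icc_self ht
    exact (((hf'' t htS).differentiableWithinAt).congr E2 (E2 htS)).mono Ioo_subset_Icc_self
  have hU : uIcc x (x + s) = S := Set.uIcc_of_le (by linarith)
  have hUo : uIoo x (x + s) = Ioo x (x + s) := uIoo_of_le (by linarith)
  obtain ⟨x', hx', hrem⟩ := taylor_mean_remainder_lagrange (f := f) (n := 2)
    (ne_of_lt (by linarith : x < x + s)) (by rw [hU]; exact hcd) (by rw [hU, hUo]; exact hdiff)
  rw [hUo] at hx'
  rw [hU] at hrem
  have hx'S : x' ∈ S := Ioo_subset_Icc_self hx'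
  have htay : taylorWithinEval f 2 S x (x + s) = f x + f' x * s + f'' x * s ^ 2 / 2 := by
    rw [taylor_within_apply]
    have hxS : x ∈ S := by constructor <;> [linarith; linarith]
    simp [Finset.sum_range_succ, iteratedDerivWithin_zero, E1 hxS, E2 hxS]
    ring
  rw [htay] at hrem
  rw [hrem, E3 hx'S]
  have hsx : x + s - x = s := by ring
  rw [hsx]
  have h6 : (((2 + 1).factorial : ℕ) : ℝ) = 6 := by norm_num [Nat.factorial]
  rw [h6, abs_div, abs_mul,
    abs_of_nonneg (show (0:ℝ) ≤ s ^ (2 + 1) by positivity),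
    abs_of_nonneg (show (0:ℝ) ≤ (6:ℝ) by norm_num)]
  have h1 : |f''' x'| ≤ M := hM x' hx'S
  have hsp : (0:ℝ) < s ^ 3 := by positivity
  have : s ^ (2 + 1) = s ^ 3 := by norm_num
  rw [this]
  nlinarith [abs_nonneg (f''' x')]

/-- Error bound for the second-order one-sided difference approximation of `f'(x)`
on the non-uniform stencil `{x, x+h₁, x+h₁+h₂}`: if `f` is three times
differentiable on `[x, x+h₁+h₂]` with `|f'''| ≤ M₃` there, then
`|a·f(x+h₁+h₂) + b·f(x+h₁) + c·f(x) − f'(x)| ≤ (M₃/6)·h₁(h₁+h₂)(2h₁+h₂)/h₂`.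
In particular the error is `O(h²)` when `h₁,h₂ ≤ h` and `h₂ ≥ κh` with `κ > 0`. -/
theorem stmt8 (h₁ h₂ : ℝ) (h₁pos : 0 < h₁) (h₂pos : 0 < h₂)
    (a b c : ℝ)
    (ha : a = -h₁ / (h₂ * (h₁ + h₂)))
    (hb : b = (h₁ + h₂) / (h₁ * h₂))
    (hc : c = (h₁^2 - (h₁ + h₂)^2) / (h₁ * h₂ * (h₁ + h₂)))
    (x M₃ : ℝ) (f f' f'' f''' : ℝ → ℝ)
    (hf : ∀ t ∈ Set.Icc x (x + h₁ + h₂),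
      HasDerivWithinAt f (f' t) (Set.Icc x (x + h₁ + h₂)) t)
    (hf' : ∀ t ∈ Set.Icc x (x + h₁ + h₂),
      HasDerivWithinAt f' (f'' t) (Set.Icc x (x + h₁ + h₂)) t)
    (hf'' : ∀ t ∈ Set.Icc x (x + h₁ + h₂),
      HasDerivWithinAt f'' (f''' t) (Set.Icc x (x + h₁ + h₂)) t)
    (hM₃ : ∀ t ∈ Set.Icc x (x + h₁ + h₂), |f''' t| ≤ M₃) :
    |a * f (x + h₁ + h₂) + b * f (x + h₁) + c * f x - f' x|
      ≤ (M₃ / 6) * h₁ * (h₁ + h₂) * (2 * h₁ + h₂) / h₂ ∧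
    ∀ h κ : ℝ, 0 < κ → h₁ ≤ h → h₂ ≤ h → κ * h ≤ h₂ →
      |a * f (x + h₁ + h₂) + b * f (x + h₁) + c * f x - f' x|
        ≤ (M₃ / κ) * h^2 := by
  have hMnn : 0 ≤ M₃ := le_trans (abs_nonneg _)
    (hM₃ x ⟨le_refl x, by linarith⟩)
  have hsub : Set.Icc x (x + h₁) ⊆ Set.Icc x (x + h₁ + h₂) :=
    Set.Icc_subset_Icc_right (by linarith)
  have heq : x + h₁ + h₂ = x + (h₁ + h₂) := by ring
  -- Taylor bound for step h₁
  have B1 := taylor3_bound x h₁ M₃ h₁pos f f' f'' f'''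
    (fun t ht => (hf t (hsub ht)).mono hsub)
    (fun t ht => (hf' t (hsub ht)).mono hsub)
    (fun t ht => (hf'' t (hsub ht)).mono hsub)
    (fun t ht => hM₃ t (hsub ht))
  -- Taylor bound for step h₁ + h₂
  have B2 := taylor3_bound x (h₁ + h₂) M₃ (by linarith) f f' f'' f'''
    (by rw [← heq]; exact hf) (by rw [← heq]; exact hf')
    (by rw [← heq]; exact hf'') (by rw [← heq]; exact hM₃)
  set E₁ := f (x + h₁) - (f x + f' x * h₁ + f'' x * h₁ ^ 2 / 2) with hE₁
  set E₂ := f (x + (h₁ + h₂)) - (f x + f' x * (h₁ + h₂) + f'' x * (h₁ + h₂) ^ 2 / 2) with hE₂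
  have key : a * f (x + h₁ + h₂) + b * f (x + h₁) + c * f x - f' x = a * E₂ + b * E₁ := by
    rw [heq, hE₁, hE₂, ha, hb, hc]
    have n1 : h₁ ≠ 0 := ne_of_gt h₁pos
    have n2 : h₂ ≠ 0 := ne_of_gt h₂pos
    have n3 : h₁ + h₂ ≠ 0 := by positivity
    field_simp
    ring
  have habs : |a| = h₁ / (h₂ * (h₁ + h₂)) := by
    rw [ha, abs_div, abs_neg, abs_of_pos h₁pos, abs_of_pos (by positivity)]
  have hbabs : |b| = (h₁ + h₂) / (h₁ * h₂) := by
    rw [hb, abs_of_pos (by positivity)]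
  have main : |a * f (x + h₁ + h₂) + b * f (x + h₁) + c * f x - f' x|
      ≤ (M₃ / 6) * h₁ * (h₁ + h₂) * (2 * h₁ + h₂) / h₂ := by
    rw [key]
    calc |a * E₂ + b * E₁| ≤ |a| * |E₂| + |b| * |E₁| := by
          rw [← abs_mul, ← abs_mul]; exact abs_add_le _ _
      _ ≤ |a| * (M₃ * (h₁ + h₂) ^ 3 / 6) + |b| * (M₃ * h₁ ^ 3 / 6) :=
          add_le_add (mul_le_mul_of_nonneg_left B2 (abs_nonneg a))
            (mul_le_mul_of_nonneg_left B1 (abs_nonneg b))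
      _ = (M₃ / 6) * h₁ * (h₁ + h₂) * (2 * h₁ + h₂) / h₂ := by
          rw [habs, hbabs]
          field_simp
          ring
  refine ⟨main, fun h κ hκ hh1 hh2 hκh => le_trans main ?_⟩
  have hpos : 0 < h := lt_of_lt_of_le h₁pos hh1
  rw [div_le_iff₀ h₂pos]
  have hκ' : M₃ / κ * h ^ 2 * h₂ = M₃ * h ^ 2 * h₂ / κ := by ring
  rw [hκ', le_div_iff₀ hκ]
  have e1 : h₁ * (h₁ + h₂) ≤ h * (2 * h) :=
    mul_le_mul hh1 (by linarith) (by positivity) hpos.le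
  have e2 : h₁ * (h₁ + h₂) * (2 * h₁ + h₂) ≤ h * (2 * h) * (3 * h) :=
    mul_le_mul e1 (by linarith) (by positivity) (by positivity)
  have t1 : M₃ * κ * (h₁ * (h₁ + h₂) * (2 * h₁ + h₂)) ≤ M₃ * κ * (h * (2 * h) * (3 * h)) :=
    mul_le_mul_of_nonneg_left e2 (mul_nonneg hMnn hκ.le)
  have t2 : M₃ * h ^ 2 * (κ * h) ≤ M₃ * h ^ 2 * h₂ :=
    mul_le_mul_of_nonneg_left hκh (by positivity)
  nlinarith [t1, t2]
end
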